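/- Let J ⊆ [0,∞) be a set with no accumulation point in ℝ. Then the set {0} ∪ { x ∈ ℝ : x = j₁ + ⋯ + j_l for some l ∈ ℕ⁺ and j₁, …, j_l ∈ J } of all finite sums of elements of J also has no accumulation point in ℝ. -/

import Mathlib

open Filter

/-- A set of reals satisfies the descending chain condition (DCC) if it contains
no infinite strictly decreasing sequence. -/
def DCC (S : Set ℝ) : Prop := ¬ ∃ f : ℕ → ℝ, StrictAnti f ∧ ∀ n, f n ∈ S

/-- A set of reals satisfies the ascending chain condition (ACC) if it contains
no infinite strictly increasing sequence. -/
def ACC (S : Set ℝ) : Prop := ¬ ∃ f : ℕ → ℝ, StrictMono f ∧ ∀ n, f n ∈ S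

/-- `x` is an accumulation point of `S` if every neighborhood of `x` contains a
point of `S` different from `x`. -/
def IsAccPt (x : ℝ) (S : Set ℝ) : Prop := ∀ ε > 0, ∃ y ∈ S, y ≠ x ∧ |y - x| < ε

/-- The set `∂S` of accumulation points of `S` in `ℝ`. -/
def accPts (S : Set ℝ) : Set ℝ := {x | IsAccPt x S}

/-- The set of all (nonempty) finite sums of elements of `I`. -/
def finSums (I : Set ℝ) : Set ℝ :=
  {x | ∃ l : ℕ, 0 < l ∧ ∃ g : Fin l → ℝ, (∀ p, g p ∈ I) ∧ x = ∑ p, g p}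

/-- `I₊ = {0} ∪ { x ∈ [0,1] : x is a nonempty finite sum of elements of I }`. -/
def plusSet (I : Set ℝ) : Set ℝ := {0} ∪ (Set.Icc 0 1 ∩ finSums I)

/-- `D(I) = { a ≤ 1 : a = (m - 1 + f)/m, m ∈ ℕ⁺, f ∈ I₊ }`. -/
def DSet (I : Set ℝ) : Set ℝ :=
  {a | a ≤ 1 ∧ ∃ m : ℕ, 0 < m ∧ ∃ f ∈ plusSet I, a = ((m : ℝ) - 1 + f) / m}

/-- `𝒟_c(I;J) = { a ≤ 1 : a = (m - 1 + f + kc)/m, m ∈ ℕ⁺, f ∈ I₊,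
k a nonzero finite sum of elements of J }`. -/
def DcSet (I J : Set ℝ) (c : ℝ) : Set ℝ :=
  {a | a ≤ 1 ∧ ∃ m : ℕ, 0 < m ∧ ∃ f ∈ plusSet I, ∃ k ∈ finSums J, k ≠ 0 ∧
    a = ((m : ℝ) - 1 + f + k * c) / m}

/-- The closure `S̄ = S ∪ ∂S` of `S` in `ℝ`. -/
def clSet (S : Set ℝ) : Set ℝ := S ∪ accPts S

/-- A set with no accumulation points meets every bounded interval in a finite set. -/
lemma finite_of_no_accPt (S : Set ℝ) (h : ∀ x, ¬ IsAccPt x S) (a b : ℝ) :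
    (S ∩ Set.Icc a b).Finite := by
  by_contra hinf
  have hinf' : (S ∩ Set.Icc a b).Infinite := hinf
  set T := S ∩ Set.Icc a b with hT
  have hbd : Bornology.IsBounded T :=
    (Metric.isBounded_Icc a b).subset Set.inter_subset_right
  let f : ℕ → ℝ := fun n => (hinf'.natEmbedding T n : ℝ)
  have hfmem : ∀ n, f n ∈ T := fun n => (hinf'.natEmbedding T n).2
  have hfinj : Function.Injective f := by
    intro m n hmn
    have := (hinf'.natEmbedding T).injective (Subtype.ext hmn)
    exact this
  obtain ⟨x, -, φ, hφ, hconv⟩ := tendsto_subseq_of_bounded hbd hfmem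
  apply h x
  intro ε hε
  have := Metric.tendsto_atTop.mp hconv ε hε
  obtain ⟨N, hN⟩ := this
  -- among f (φ N) and f (φ (N+1)), at most one equals x
  have hne : f (φ N) ≠ x ∨ f (φ (N+1)) ≠ x := by
    by_contra hcon
    push_neg at hcon
    have : f (φ N) = f (φ (N+1)) := hcon.1.trans hcon.2.symm
    exact absurd (hφ.injective (hfinj this)) (by omega)
  rcases hne with hne | hne
  · exact ⟨f (φ N), (hfmem _).1, hne, by simpa [Real.dist_eq] using hN N le_rfl⟩
  · exact ⟨f (φ (N+1)), (hfmem _).1, hne, by simpa [Real.dist_eq] using hN (N+1) (by omega)⟩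

/-- Sums of at most `n` elements of `P` (with repetition). -/
noncomputable def sumsUpTo (P : Finset ℝ) : ℕ → Finset ℝ
  | 0 => {0}
  | n+1 => sumsUpTo P n ∪ (P ×ˢ sumsUpTo P n).image (fun p => p.1 + p.2)

lemma sumsUpTo_mono (P : Finset ℝ) : ∀ {m n : ℕ}, m ≤ n → sumsUpTo P m ⊆ sumsUpTo P n := by
  intro m n hmn
  induction n with
  | zero => simp_all
  | succ k ih =>
    rcases Nat.lt_or_ge m (k+1) with h | h
    · exact (ih (by omega)).trans (by simp [sumsUpTo, Finset.subset_union_left])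
    · have : m = k + 1 := by omega
      subst this; exact subset_rfl

lemma sum_mem_sumsUpTo (P : Finset ℝ) (m : Multiset ℝ) (hm : ∀ a ∈ m, a ∈ P) :
    m.sum ∈ sumsUpTo P (Multiset.card m) := by
  induction m using Multiset.induction with
  | empty => simp [sumsUpTo]
  | cons a s ih =>
    simp only [Multiset.sum_cons, Multiset.card_cons, sumsUpTo]
    apply Finset.mem_union_right
    apply Finset.mem_image.mpr
    exact ⟨(a, s.sum), Finset.mem_product.mpr ⟨hm a (by simp),
      (ih (fun b hb => hm b (by simp [hb])) : _)⟩, rfl⟩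

lemma finSums_bounded_finite (J : Set ℝ) (hJ0 : J ⊆ Set.Ici 0)
    (hJ : ∀ x, ¬ IsAccPt x J) (M : ℝ) : (finSums J ∩ Set.Iic M).Finite := by
  have hFfin : (J ∩ Set.Icc 0 M).Finite := finite_of_no_accPt J hJ 0 M
  set F : Finset ℝ := hFfin.toFinset with hFdef
  set P : Finset ℝ := F.filter (fun a => a ≠ 0) with hPdef
  have hPpos : ∀ a ∈ P, 0 < a := by
    intro a ha
    rw [hPdef, Finset.mem_filter] at ha
    have := (hFfin.mem_toFinset.mp ha.1).2.1
    exact lt_of_le_of_ne this (Ne.symm ha.2)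
  obtain ⟨δ, hδ0, hδle⟩ : ∃ δ > 0, ∀ a ∈ P, δ ≤ a := by
    by_cases hP : P.Nonempty
    · exact ⟨P.min' hP, hPpos _ (P.min'_mem hP), fun a ha => P.min'_le a ha⟩
    · exact ⟨1, one_pos, fun a ha => absurd ⟨a, ha⟩ hP⟩
  set N : ℕ := ⌈M / δ⌉₊ with hNdef
  apply Set.Finite.subset (sumsUpTo P N).finite_toSet
  rintro x ⟨⟨l, hl, g, hg, rfl⟩, hxM⟩
  have hg0 : ∀ p, 0 ≤ g p := fun p => hJ0 (hg p)
  have hsum0 : (0:ℝ) ≤ ∑ p, g p := Finset.sum_nonneg fun p _ => hg0 p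
  have hgle : ∀ p, g p ≤ M := by
    intro p
    calc g p ≤ ∑ q, g q := Finset.single_le_sum (fun q _ => hg0 q) (Finset.mem_univ p)
    _ ≤ M := hxM
  set m0 : Multiset ℝ := Multiset.map g Finset.univ.val with hm0
  set m : Multiset ℝ := m0.filter (fun a => a ≠ 0) with hmdef
  have hmsum : m.sum = ∑ p, g p := by
    have h1 : (m0.filter (fun a => a ≠ 0)) + (m0.filter (fun a => ¬ a ≠ 0)) = m0 :=
      Multiset.filter_add_not _ _
    have h2 : (m0.filter (fun a => ¬ a ≠ 0)).sum = 0 := by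
      apply Multiset.sum_eq_zero
      intro a ha
      have := Multiset.of_mem_filter ha
      simpa using this
    have h3 : m.sum + (m0.filter (fun a => ¬ a ≠ 0)).sum = m0.sum := by
      rw [← Multiset.sum_add, h1]
    have h4 : m0.sum = ∑ p, g p := by
      rw [hm0]; rfl
    rw [h2, add_zero] at h3
    rw [h3, h4]
  have hmmem : ∀ a ∈ m, a ∈ P := by
    intro a ha
    have ham0 : a ∈ m0 := Multiset.mem_of_mem_filter ha
    have hane : a ≠ 0 := by simpa using Multiset.of_mem_filter ha
    obtain ⟨p, -, rfl⟩ := Multiset.mem_map.mp ham0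
    rw [hPdef, Finset.mem_filter]
    exact ⟨hFfin.mem_toFinset.mpr ⟨hg p, hg0 p, hgle p⟩, hane⟩
  have hcard : Multiset.card m ≤ N := by
    have h1 : (Multiset.card m) • δ ≤ m.sum :=
      Multiset.card_nsmul_le_sum (fun a ha => hδle a (hmmem a ha))
    have h2 : (Multiset.card m : ℝ) * δ ≤ M := by
      rw [nsmul_eq_mul] at h1
      exact h1.trans (hmsum ▸ hxM)
    have h3 : (Multiset.card m : ℝ) ≤ M / δ := (le_div_iff₀ hδ0).mpr h2
    exact_mod_cast h3.trans (Nat.le_ceil _)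
  have := sum_mem_sumsUpTo P m hmmem
  rw [hmsum] at this
  exact Finset.mem_coe.mpr (sumsUpTo_mono P hcard this)

/-- A locally finite set has no accumulation points. -/
lemma no_accPt_of_locally_finite (S : Set ℝ)
    (h : ∀ a b : ℝ, (S ∩ Set.Icc a b).Finite) : ∀ x, ¬ IsAccPt x S := by
  intro x hx
  have hfin : ((S ∩ Set.Icc (x-1) (x+1)) \ {x}).Finite := ((h (x-1) (x+1)).diff)
  set T := hfin.toFinset with hT
  obtain ⟨ε, hε0, hεle⟩ : ∃ ε > 0, ∀ y ∈ T, ε ≤ |y - x| := by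
    by_cases hne : T.Nonempty
    · set D := T.image (fun y => |y - x|) with hD
      have hDne : D.Nonempty := hne.image _
      refine ⟨D.min' hDne, ?_, ?_⟩
      · obtain ⟨y, hy, hyeq⟩ := Finset.mem_image.mp (D.min'_mem hDne)
        have : y ≠ x := by
          have := hfin.mem_toFinset.mp hy
          simpa using this.2
        rw [← hyeq]
        exact abs_pos.mpr (sub_ne_zero.mpr this)
      · intro y hy
        exact D.min'_le _ (Finset.mem_image_of_mem _ hy)
    · exact ⟨1, one_pos, fun y hy => absurd ⟨y, hy⟩ hne⟩
  obtain ⟨y, hyS, hyne, hylt⟩ := hx (min ε 1) (lt_min hε0 one_pos)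
  have hy1 : |y - x| < 1 := hylt.trans_le (min_le_right _ _)
  have hymem : y ∈ T := by
    rw [hfin.mem_toFinset]
    refine ⟨⟨hyS, ?_, ?_⟩, hyne⟩
    · linarith [abs_lt.mp hy1 |>.1]
    · linarith [abs_lt.mp hy1 |>.2]
  exact absurd (hεle y hymem) (not_le.mpr (hylt.trans_le (min_le_left _ _)))

/-- If `J ⊆ [0,∞)` has no accumulation point in `ℝ`, then the set of all finite
sums of elements of `J` (together with `0`) has no accumulation point in `ℝ`. -/
theorem no_accPt_finSums (J : Set ℝ) (hJ0 : J ⊆ Set.Ici 0)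
    (hJ : ∀ x, ¬ IsAccPt x J) :
    ∀ x, ¬ IsAccPt x ({0} ∪ finSums J) := by
  apply no_accPt_of_locally_finite
  intro a b
  apply Set.Finite.subset (((finSums_bounded_finite J hJ0 hJ b).union (Set.finite_singleton 0)))
  rintro y ⟨hy | hy, hab⟩
  · exact Or.inr hy
  · exact Or.inl ⟨hy, hab.2⟩
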